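/- Let n ≥ 1 and let K be a compact set of positive definite Hermitian n×n complex matrices. Then there exist a positive integer N, unit vectors γ₁, …, γ_N ∈ ℂⁿ whose collection contains an orthonormal basis of ℂⁿ, a constant C ≥ 1, and real-valued functions β₁, …, β_N on K satisfying 1/C ≤ β_ν(A) ≤ C for all A ∈ K and all ν ∈ {1, …, N}, such that A = ∑_{ν=1}^{N} β_ν(A) · γ_ν γ_νᴴ for every A ∈ K, where γ γᴴ denotes the rank-one n×n matrix whose (i,j) entry is γ_i · conj(γ_j). -/

import Mathlib

open Matrix Complex Finset
open scoped ComplexOrder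
namespace Gill
variable {n : ℕ}

noncomputable def rankOne (γ : Fin n → ℂ) : Matrix (Fin n) (Fin n) ℂ :=
  Matrix.vecMulVec γ (fun j => (starRingEnd ℂ) (γ j))

noncomputable def uu (p : Fin n × Fin n) : ℂ :=
  if p.1 = p.2 then 1 else (Real.sqrt 2 : ℝ)⁻¹
noncomputable def vv (p : Fin n × Fin n) : ℂ :=
  if p.1 = p.2 then 0 else
    if p.1 < p.2 then ((Real.sqrt 2 : ℝ)⁻¹ : ℂ) else ((Real.sqrt 2 : ℝ)⁻¹ : ℂ) * Complex.I
noncomputable def gam0 (p : Fin n × Fin n) : Fin n → ℂ :=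
  fun a => (if a = p.1 then uu p else 0) + (if a = p.2 then vv p else 0)
lemma gam0_eq_zero {p : Fin n × Fin n} {a : Fin n} (h1 : a ≠ p.1) (h2 : a ≠ p.2) :
    gam0 p a = 0 := by simp [gam0, h1, h2]
lemma sqrt2_sq : ((Real.sqrt 2 : ℝ) : ℂ)⁻¹ * ((Real.sqrt 2 : ℝ) : ℂ)⁻¹ = 2⁻¹ := by
  rw [← mul_inv]; norm_cast
  rw [Real.mul_self_sqrt (by norm_num)]; norm_num

lemma conj_s : (starRingEnd ℂ) (((Real.sqrt 2 : ℝ) : ℂ))⁻¹ = ((Real.sqrt 2 : ℝ) : ℂ)⁻¹ := by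
  rw [map_inv₀, Complex.conj_ofReal]

lemma hval1 : ((Real.sqrt 2:ℝ):ℂ)⁻¹ * (starRingEnd ℂ) (((Real.sqrt 2:ℝ):ℂ)⁻¹) = 2⁻¹ := by
  rw [map_inv₀, Complex.conj_ofReal, sqrt2_sq]

lemma hval2 : (((Real.sqrt 2:ℝ):ℂ)⁻¹ * Complex.I) *
    (starRingEnd ℂ) ((((Real.sqrt 2:ℝ):ℂ))⁻¹ * Complex.I) = 2⁻¹ := by
  rw [_root_.map_mul, map_inv₀, Complex.conj_ofReal, Complex.conj_I, mul_mul_mul_comm, sqrt2_sq,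
    mul_neg, Complex.I_mul_I, neg_neg, mul_one]

noncomputable def coef0 (p : Fin n × Fin n) (H : Matrix (Fin n) (Fin n) ℂ) : ℝ :=
  if p.1 = p.2 then
    (H p.1 p.1).re - ∑ k, (if p.1 < k then (H p.1 k).re + (H p.1 k).im
      else if k < p.1 then (H k p.1).re + (H k p.1).im else 0)
  else if p.1 < p.2 then 2 * (H p.1 p.2).re else 2 * (H p.2 p.1).im

lemma recon (H : Matrix (Fin n) (Fin n) ℂ) (hH : H.IsHermitian) :
    H = ∑ p : Fin n × Fin n, coef0 p H • rankOne (gam0 p) := by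
  have him : ∀ a, (H a a).im = 0 := by
    intro a
    have h := hH.apply a a
    have h2 : (H a a).im = -(H a a).im := by
      simpa [Complex.ext_iff] using congrArg Complex.im h.symm
    linarith
  have happ : ∀ a b, H a b = (starRingEnd ℂ) (H b a) := fun a b => (hH.apply a b).symm
  ext a b
  have hF : (∑ p : Fin n × Fin n, coef0 p H • rankOne (gam0 p)) a b
      = ∑ p : Fin n × Fin n, ((coef0 p H : ℂ)) * (gam0 p a * (starRingEnd ℂ) (gam0 p b)) := by
    rw [Matrix.sum_apply]
    refine Finset.sum_congr rfl fun p _ => ?_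
    simp [rankOne, Matrix.smul_apply, Matrix.vecMulVec_apply, Complex.real_smul, mul_assoc]
  rw [hF]
  by_cases hab : a = b
  · subst hab
    -- diagonal case
    rw [Fintype.sum_prod_type]
    rw [Fintype.sum_eq_add_sum_compl a
      (fun i => ∑ j, (coef0 (i, j) H : ℂ) * (gam0 (i, j) a * (starRingEnd ℂ) (gam0 (i, j) a)))]
    rw [Fintype.sum_eq_add_sum_compl a
      (fun j => (coef0 (a, j) H : ℂ) * (gam0 (a, j) a * (starRingEnd ℂ) (gam0 (a, j) a)))]
    have h1 : (coef0 (a, a) H : ℂ) * (gam0 (a, a) a * (starRingEnd ℂ) (gam0 (a, a) a))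
        = (coef0 (a, a) H : ℂ) := by
      simp [gam0, uu, vv]
    have h2 : ∀ j ∈ ({a}ᶜ : Finset (Fin n)),
        (coef0 (a, j) H : ℂ) * (gam0 (a, j) a * (starRingEnd ℂ) (gam0 (a, j) a))
        = (coef0 (a, j) H : ℂ) * 2⁻¹ := by
      intro j hj
      have hja : a ≠ j := by simpa [eq_comm] using (Finset.mem_compl.mp hj)
      have : gam0 (a, j) a = ((Real.sqrt 2 : ℝ)⁻¹ : ℂ) := by simp [gam0, uu, hja]
      rw [this, hval1]
    have h3 : ∀ i ∈ ({a}ᶜ : Finset (Fin n)),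
        (∑ j, (coef0 (i, j) H : ℂ) * (gam0 (i, j) a * (starRingEnd ℂ) (gam0 (i, j) a)))
        = (coef0 (i, a) H : ℂ) * 2⁻¹ := by
      intro i hi
      have hia : i ≠ a := by simpa using (Finset.mem_compl.mp hi)
      rw [Finset.sum_eq_single a]
      · have hg : gam0 (i, a) a = vv (i, a) := by simp [gam0, uu, vv, (Ne.symm hia)]
        rw [hg]
        congr 1
        have hvv : vv ((i,a) : Fin n × Fin n) = if i < a then ((Real.sqrt 2:ℝ):ℂ)⁻¹
            else ((Real.sqrt 2:ℝ):ℂ)⁻¹ * Complex.I := by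
          simp only [vv]; rw [if_neg hia]
        by_cases hlt : i < a
        · rw [hvv, if_pos hlt, hval1]
        · rw [hvv, if_neg hlt, hval2]
      · intro j _ hja
        have : gam0 (i, j) a = 0 := gam0_eq_zero (Ne.symm hia) (Ne.symm hja)
        simp [this]
      · intro h; exact absurd (Finset.mem_univ a) h
    rw [h1, Finset.sum_congr rfl h2, Finset.sum_congr rfl h3]
    have hc : coef0 ((a,a) : Fin n × Fin n) H = (H a a).re - ∑ k, (if a < k then (H a k).re + (H a k).im
        else if k < a then (H k a).re + (H k a).im else 0) := by
      simp [coef0]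
    have hsum : ∀ j ∈ ({a}ᶜ : Finset (Fin n)),
        (coef0 (a,j) H) * 2⁻¹ + (coef0 (j,a) H) * 2⁻¹
        = (if a < j then (H a j).re + (H a j).im
           else if j < a then (H j a).re + (H j a).im else 0) := by
      intro j hj
      have hja : a ≠ j := by simpa [eq_comm] using (Finset.mem_compl.mp hj)
      rcases lt_or_gt_of_ne hja with hlt | hgt
      · have e1 : coef0 ((a,j) : Fin n × Fin n) H = 2 * (H a j).re := by
          simp only [coef0]; rw [if_neg hja, if_pos hlt]
        have e2 : coef0 ((j,a) : Fin n × Fin n) H = 2 * (H a j).im := by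
          simp only [coef0]; rw [if_neg (Ne.symm hja), if_neg (not_lt.mpr hlt.le)]
        rw [e1, e2, if_pos hlt]; ring
      · have e1 : coef0 ((a,j) : Fin n × Fin n) H = 2 * (H j a).im := by
          simp only [coef0]; rw [if_neg hja, if_neg (not_lt.mpr hgt.le)]
        have e2 : coef0 ((j,a) : Fin n × Fin n) H = 2 * (H j a).re := by
          simp only [coef0]; rw [if_neg (Ne.symm hja), if_pos hgt]
        rw [e1, e2, if_neg (not_lt.mpr hgt.le), if_pos hgt]; ring
    have key : (coef0 ((a,a) : Fin n × Fin n) H) + ((∑ j ∈ ({a}ᶜ : Finset (Fin n)), (coef0 (a,j) H) * 2⁻¹)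
        + (∑ i ∈ ({a}ᶜ : Finset (Fin n)), (coef0 (i,a) H) * 2⁻¹)) = (H a a).re := by
      have e1 : (∑ j ∈ ({a}ᶜ : Finset (Fin n)), (coef0 (a,j) H) * 2⁻¹)
          + (∑ i ∈ ({a}ᶜ : Finset (Fin n)), (coef0 (i,a) H) * 2⁻¹)
          = ∑ j ∈ ({a}ᶜ : Finset (Fin n)),
            (if a < j then (H a j).re + (H a j).im
             else if j < a then (H j a).re + (H j a).im else 0) := by
        rw [← Finset.sum_add_distrib]
        exact Finset.sum_congr rfl hsum
      have e2 : ∑ k, (if a < k then (H a k).re + (H a k).im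
          else if k < a then (H k a).re + (H k a).im else 0)
          = ∑ j ∈ ({a}ᶜ : Finset (Fin n)),
            (if a < j then (H a j).re + (H a j).im
             else if j < a then (H j a).re + (H j a).im else 0) := by
        rw [Fintype.sum_eq_add_sum_compl a]
        simp
      rw [e1, hc, e2]
      ring
    have hre : H a a = ((H a a).re : ℂ) := by
      rw [← Complex.re_add_im (H a a), him a]
      simp
    rw [hre, ← key]
    push_cast
    ring
  · -- off-diagonal case
    rw [show (Finset.univ : Finset (Fin n × Fin n)) =
        ({(a,b),(b,a)} : Finset (Fin n × Fin n)) ∪ (Finset.univ \ {(a,b),(b,a)}) from by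
      simp [Finset.union_sdiff_of_subset]]
    rw [Finset.sum_union (Finset.disjoint_sdiff)]
    have hz : ∑ p ∈ (Finset.univ \ {(a,b),(b,a)} : Finset (Fin n × Fin n)),
        ((coef0 p H : ℂ)) * (gam0 p a * (starRingEnd ℂ) (gam0 p b)) = 0 := by
      refine Finset.sum_eq_zero fun p hp => ?_
      rcases Finset.mem_sdiff.mp hp with ⟨-, hps⟩
      have hps' : p ≠ (a,b) ∧ p ≠ (b,a) := by
        constructor <;> (intro h; exact hps (by simp [h]))
      by_cases ha1 : a = p.1
      · by_cases hb2 : b = p.2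
        · exact absurd (Prod.ext ha1.symm hb2.symm) hps'.1
        · by_cases hb1 : b = p.1
          · exact absurd (ha1.trans hb1.symm) hab
          · rw [gam0_eq_zero hb1 hb2]; simp
      · by_cases ha2 : a = p.2
        · by_cases hb1 : b = p.1
          · exact absurd (Prod.ext hb1.symm ha2.symm) hps'.2
          · by_cases hb2 : b = p.2
            · exact absurd (ha2.trans hb2.symm) hab
            · rw [gam0_eq_zero hb1 hb2]; simp
        · rw [gam0_eq_zero ha1 ha2]; simp
    rw [hz, add_zero]
    have hpairne : ((a,b) : Fin n × Fin n) ≠ (b,a) := by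
      simp [Prod.ext_iff]; intro h; exact absurd h hab
    rw [Finset.sum_pair hpairne]
    have gab_a : gam0 (a,b) a = uu (a,b) := by simp [gam0, hab]
    have gab_b : gam0 (a,b) b = vv (a,b) := by simp [gam0, Ne.symm hab]
    have gba_a : gam0 (b,a) a = vv (b,a) := by simp [gam0, hab]
    have gba_b : gam0 (b,a) b = uu (b,a) := by simp [gam0, Ne.symm hab]
    rw [gab_a, gab_b, gba_a, gba_b]
    rcases lt_or_gt_of_ne hab with hlt | hgt
    · have hnlt : ¬ b < a := not_lt.mpr hlt.le
      have c1 : coef0 ((a,b) : Fin n × Fin n) H = 2 * (H a b).re := by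
        simp only [coef0]; rw [if_neg hab, if_pos hlt]
      have c2 : coef0 ((b,a) : Fin n × Fin n) H = 2 * (H a b).im := by
        simp only [coef0]; rw [if_neg (Ne.symm hab), if_neg hnlt]
      have u1 : uu ((a,b) : Fin n × Fin n) = ((Real.sqrt 2:ℝ):ℂ)⁻¹ := by
        simp only [uu]; rw [if_neg hab]
      have v1 : vv ((a,b) : Fin n × Fin n) = ((Real.sqrt 2:ℝ):ℂ)⁻¹ := by
        simp only [vv]; rw [if_neg hab, if_pos hlt]
      have u2 : uu ((b,a) : Fin n × Fin n) = ((Real.sqrt 2:ℝ):ℂ)⁻¹ := by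
        simp only [uu]; rw [if_neg (Ne.symm hab)]
      have v2 : vv ((b,a) : Fin n × Fin n) = ((Real.sqrt 2:ℝ):ℂ)⁻¹ * Complex.I := by
        simp only [vv]; rw [if_neg (Ne.symm hab), if_neg hnlt]
      rw [c1, c2, u1, v1, u2, v2, map_inv₀, Complex.conj_ofReal]
      calc H a b = ((H a b).re : ℂ) + ((H a b).im : ℂ) * Complex.I :=
            (Complex.re_add_im (H a b)).symm
        _ = ↑(2 * (H a b).re) * (((Real.sqrt 2:ℝ):ℂ)⁻¹ * ((Real.sqrt 2:ℝ):ℂ)⁻¹)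
            + ↑(2 * (H a b).im) * ((((Real.sqrt 2:ℝ):ℂ)⁻¹ * Complex.I) * ((Real.sqrt 2:ℝ):ℂ)⁻¹) := by
            push_cast
            rw [show ∀ x y s : ℂ, 2*x * (s*s) + 2*y*((s*Complex.I)*s) = (s*s) * (2*x) + (s*s)*(2*y)*Complex.I from fun x y s => by ring, sqrt2_sq]
            ring
        _ = _ := by ring
    · have hnlt : ¬ a < b := not_lt.mpr hgt.le
      have c1 : coef0 ((a,b) : Fin n × Fin n) H = 2 * (H b a).im := by
        simp only [coef0]; rw [if_neg hab, if_neg hnlt]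
      have c2 : coef0 ((b,a) : Fin n × Fin n) H = 2 * (H b a).re := by
        simp only [coef0]; rw [if_neg (Ne.symm hab), if_pos hgt]
      have u1 : uu ((a,b) : Fin n × Fin n) = ((Real.sqrt 2:ℝ):ℂ)⁻¹ := by
        simp only [uu]; rw [if_neg hab]
      have v1 : vv ((a,b) : Fin n × Fin n) = ((Real.sqrt 2:ℝ):ℂ)⁻¹ * Complex.I := by
        simp only [vv]; rw [if_neg hab, if_neg hnlt]
      have u2 : uu ((b,a) : Fin n × Fin n) = ((Real.sqrt 2:ℝ):ℂ)⁻¹ := by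
        simp only [uu]; rw [if_neg (Ne.symm hab)]
      have v2 : vv ((b,a) : Fin n × Fin n) = ((Real.sqrt 2:ℝ):ℂ)⁻¹ := by
        simp only [vv]; rw [if_neg (Ne.symm hab), if_pos hgt]
      rw [c1, c2, u1, v1, u2, v2, _root_.map_mul, map_inv₀, Complex.conj_ofReal, Complex.conj_I]
      have hval : H a b = ((H b a).re : ℂ) - ((H b a).im : ℂ) * Complex.I := by
        rw [← hH.apply a b]
        apply Complex.ext <;> simp
      rw [hval]
      push_cast
      rw [show ∀ x y s : ℂ, 2*y * (s*(s*(-Complex.I))) + 2*x*((s)*(s)) = (s*s) * (2*x) - (s*s)*(2*y)*Complex.I from fun x y s => by ring, sqrt2_sq]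
      ring

/-- `gam0` as an element of Euclidean space. -/
noncomputable def gamE (p : Fin n × Fin n) : EuclideanSpace ℂ (Fin n) := WithLp.toLp 2 (gam0 p)

lemma gamE_apply (p : Fin n × Fin n) (a : Fin n) : gamE p a = gam0 p a := rfl

lemma gam0_norm (p : Fin n × Fin n) :
    ‖gamE p‖ = 1 := by
  rw [EuclideanSpace.norm_eq]
  have hsq : ‖((Real.sqrt 2:ℝ):ℂ)⁻¹‖ ^ 2 = 2⁻¹ := by
    rw [norm_inv]
    rw [show ‖(((Real.sqrt 2:ℝ)):ℂ)‖ = |Real.sqrt 2| from Complex.norm_real _]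
    rw [_root_.abs_of_nonneg (Real.sqrt_nonneg 2), inv_pow, Real.sq_sqrt (by norm_num : (0:ℝ) ≤ 2)]
  have hs : ∑ a, ‖gamE p a‖ ^ 2 = 1 := by
    simp only [gamE_apply]
    by_cases hp : p.1 = p.2
    · rw [Finset.sum_eq_single p.1]
      · have hg : gam0 p p.1 = 1 := by
          simp [gam0, uu, vv, hp]
        rw [hg]; simp
      · intro a _ ha
        rw [gam0_eq_zero ha (fun h => ha (h.trans hp.symm))]; simp
      · intro h; exact absurd (Finset.mem_univ _) h
    · rw [Fintype.sum_eq_add_sum_compl p.1]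
      have g1 : gam0 p p.1 = ((Real.sqrt 2:ℝ):ℂ)⁻¹ := by
        simp [gam0, uu, hp]
      have g2 : gam0 p p.2 = vv p := by
        have h21 : ¬ (p.2 = p.1) := fun h => hp h.symm
        simp [gam0, h21]
      have hrest : ∑ a ∈ ({p.1}ᶜ : Finset (Fin n)), ‖gam0 p a‖ ^ 2 = 2⁻¹ := by
        rw [Finset.sum_eq_single_of_mem p.2
          (Finset.mem_compl.mpr (by simp only [Finset.mem_singleton]; exact fun h => hp h.symm))]
        · rw [g2]
          simp only [vv]
          rw [if_neg hp]
          by_cases hlt : p.1 < p.2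
          · rw [if_pos hlt]; exact hsq
          · rw [if_neg hlt, norm_mul, Complex.norm_I, mul_one]; exact hsq
        · intro a ha hne
          rw [gam0_eq_zero (by simpa using Finset.mem_compl.mp ha) hne]; simp
      rw [g1, hrest, hsq]
      norm_num
  rw [hs, Real.sqrt_one]

lemma spectral (A : Matrix (Fin n) (Fin n) ℂ) (hA : A.IsHermitian) :
    A = ∑ k, hA.eigenvalues k • rankOne (fun i => hA.eigenvectorBasis k i) := by
  conv_lhs => rw [hA.spectral_theorem, Unitary.conjStarAlgAut_apply]
  ext a b
  rw [Matrix.sum_apply, Matrix.mul_apply]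
  refine Finset.sum_congr rfl fun k _ => ?_
  rw [Matrix.mul_diagonal]
  simp only [Matrix.smul_apply, rankOne, Matrix.vecMulVec_apply, Matrix.star_apply,
    Matrix.IsHermitian.eigenvectorUnitary_apply, Function.comp_apply, Complex.real_smul,
    RCLike.star_def, RCLike.ofReal_alg]
  ring

lemma quad_star {M : Matrix (Fin n) (Fin n) ℂ} (hM : M.IsHermitian) (x : Fin n → ℂ) :
    (star x ⬝ᵥ M *ᵥ x).im = 0 := by
  have hstar : star (star x ⬝ᵥ M *ᵥ x) = star x ⬝ᵥ M *ᵥ x := by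
    conv_lhs => rw [Matrix.star_dotProduct, star_star, Matrix.star_mulVec,
      show Mᴴ = M from hM, ← Matrix.dotProduct_mulVec]
  exact Complex.conj_eq_iff_im.mp hstar

lemma quad_smul (M : Matrix (Fin n) (Fin n) ℂ) (r : ℝ) (u : Fin n → ℂ) :
    star (r • u) ⬝ᵥ M *ᵥ (r • u) = (r * r) • (star u ⬝ᵥ M *ᵥ u) := by
  rw [star_smul, star_trivial, Matrix.mulVec_smul, smul_dotProduct,
    dotProduct_smul, smul_smul]


lemma abs_coef0_le (p : Fin n × Fin n) (H : Matrix (Fin n) (Fin n) ℂ) (e : ℝ)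
    (he : 0 ≤ e) (hb : ∀ i j, ‖H i j‖ ≤ e) : |coef0 p H| ≤ (2 * n + 1) * e := by
  have h1n : 1 ≤ n := Nat.pos_of_ne_zero (fun h => Fin.elim0 (h ▸ p.1))
  have h1n' : (1:ℝ) ≤ (n:ℝ) := by exact_mod_cast h1n
  have hre : ∀ i j, |(H i j).re| ≤ e := fun i j =>
    le_trans (Complex.abs_re_le_norm _) (le_trans (le_of_eq rfl) (hb i j))
  have him : ∀ i j, |(H i j).im| ≤ e := fun i j =>
    le_trans (Complex.abs_im_le_norm _) (le_trans (le_of_eq rfl) (hb i j))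
  by_cases hp : p.1 = p.2
  · have hc : coef0 p H = (H p.1 p.1).re - ∑ k, (if p.1 < k then (H p.1 k).re + (H p.1 k).im
        else if k < p.1 then (H k p.1).re + (H k p.1).im else 0) := by
      simp only [coef0]; rw [if_pos hp]
    rw [hc]
    have hterm : ∀ k : Fin n, |(if p.1 < k then (H p.1 k).re + (H p.1 k).im
        else if k < p.1 then (H k p.1).re + (H k p.1).im else 0)| ≤ 2 * e := by
      intro k
      by_cases h1 : p.1 < k
      · rw [if_pos h1]
        calc |(H p.1 k).re + (H p.1 k).im| ≤ |(H p.1 k).re| + |(H p.1 k).im| := abs_add_le _ _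
          _ ≤ 2 * e := by have := hre p.1 k; have := him p.1 k; linarith
      · rw [if_neg h1]
        by_cases h2 : k < p.1
        · rw [if_pos h2]
          calc |(H k p.1).re + (H k p.1).im| ≤ |(H k p.1).re| + |(H k p.1).im| := abs_add_le _ _
            _ ≤ 2 * e := by have := hre k p.1; have := him k p.1; linarith
        · rw [if_neg h2]; simp; positivity
    have hsum : |∑ k, (if p.1 < k then (H p.1 k).re + (H p.1 k).im
        else if k < p.1 then (H k p.1).re + (H k p.1).im else 0)| ≤ (n:ℝ) * (2 * e) := by
      calc |∑ k, _| ≤ ∑ k : Fin n, |(if p.1 < k then (H p.1 k).re + (H p.1 k).im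
            else if k < p.1 then (H k p.1).re + (H k p.1).im else 0)| :=
          Finset.abs_sum_le_sum_abs _ _
        _ ≤ ∑ _k : Fin n, 2 * e := Finset.sum_le_sum (fun k _ => hterm k)
        _ = (n:ℝ) * (2*e) := by rw [Finset.sum_const, Finset.card_univ, Fintype.card_fin,
              nsmul_eq_mul]
    calc |(H p.1 p.1).re - ∑ k, (if p.1 < k then (H p.1 k).re + (H p.1 k).im
          else if k < p.1 then (H k p.1).re + (H k p.1).im else 0)|
        ≤ |(H p.1 p.1).re| + |∑ k, (if p.1 < k then (H p.1 k).re + (H p.1 k).im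
          else if k < p.1 then (H k p.1).re + (H k p.1).im else 0)| := abs_sub _ _
      _ ≤ e + (n:ℝ) * (2*e) := add_le_add (hre _ _) hsum
      _ ≤ (2 * n + 1) * e := by nlinarith
  · by_cases hlt : p.1 < p.2
    · have hc : coef0 p H = 2 * (H p.1 p.2).re := by
        simp only [coef0]; rw [if_neg hp, if_pos hlt]
      rw [hc, abs_mul, _root_.abs_two]
      have := hre p.1 p.2
      nlinarith
    · have hc : coef0 p H = 2 * (H p.2 p.1).im := by
        simp only [coef0]; rw [if_neg hp, if_neg hlt]
      rw [hc, abs_mul, _root_.abs_two]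
      have := him p.2 p.1
      nlinarith

lemma exists_sub_smul_posDef (hn : 1 ≤ n) {A : Matrix (Fin n) (Fin n) ℂ} (hA : A.PosDef)
    (S : Matrix (Fin n) (Fin n) ℂ) (hS : S.IsHermitian) :
    ∃ δ : ℝ, 0 < δ ∧ (A - δ • S).PosDef := by
  haveI : Nonempty (Fin n) := ⟨⟨0, hn⟩⟩
  have hfA : Continuous fun x : Fin n → ℂ => (star x ⬝ᵥ A *ᵥ x).re :=
    Complex.continuous_re.comp
      (Continuous.dotProduct continuous_star
        (Continuous.matrix_mulVec continuous_const continuous_id))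
  have hfS : Continuous fun x : Fin n → ℂ => (star x ⬝ᵥ S *ᵥ x).re :=
    Complex.continuous_re.comp
      (Continuous.dotProduct continuous_star
        (Continuous.matrix_mulVec continuous_const continuous_id))
  have hcs : IsCompact (Metric.sphere (0 : Fin n → ℂ) 1) := isCompact_sphere 0 1
  have hne : (Metric.sphere (0 : Fin n → ℂ) 1).Nonempty :=
    NormedSpace.sphere_nonempty.mpr zero_le_one
  obtain ⟨x₀, hx₀, hmin'⟩ := hcs.exists_isMinOn hne hfA.continuousOn
  obtain ⟨x₁, hx₁, hmax'⟩ := hcs.exists_isMaxOn hne hfS.continuousOn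
  have hmin := isMinOn_iff.mp hmin'
  have hmax := isMaxOn_iff.mp hmax'
  set m := (star x₀ ⬝ᵥ A *ᵥ x₀).re with hmdef
  set G := (star x₁ ⬝ᵥ S *ᵥ x₁).re with hGdef
  have hx₀ne : x₀ ≠ 0 := by
    intro h
    rw [mem_sphere_zero_iff_norm, h, norm_zero] at hx₀
    norm_num at hx₀
  have hm : 0 < m := by
    have := hA.re_dotProduct_pos hx₀ne
    simpa using this
  set δ := m / (2 * (1 + |G|)) with hδdef
  have hδpos : 0 < δ := by positivity
  refine ⟨δ, hδpos, Matrix.posDef_iff_dotProduct_mulVec.mpr ⟨?_, ?_⟩⟩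
  · have h2 : (δ • S)ᴴ = δ • S := by
      rw [Matrix.conjTranspose_smul, star_trivial, hS.eq]
    exact hA.1.sub h2
  · intro x hx
    have hsplit : star x ⬝ᵥ (A - δ • S) *ᵥ x
        = star x ⬝ᵥ A *ᵥ x - δ • (star x ⬝ᵥ S *ᵥ x) := by
      rw [Matrix.sub_mulVec, dotProduct_sub, Matrix.smul_mulVec,
        dotProduct_smul]
    rw [hsplit, Complex.lt_def]
    constructor
    · -- real part
      set r := ‖x‖ with hrdef
      have hr : 0 < r := norm_pos_iff.mpr hx
      set u := (r⁻¹ : ℝ) • x with hudef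
      have hu : u ∈ Metric.sphere (0 : Fin n → ℂ) 1 := by
        rw [mem_sphere_zero_iff_norm, hudef, norm_smul, Real.norm_eq_abs,
          abs_of_pos (inv_pos.mpr hr)]
        exact inv_mul_cancel₀ hr.ne'
      have hxu : x = r • u := by
        rw [hudef, smul_smul, mul_inv_cancel₀ hr.ne', one_smul]
      have hqA : (star x ⬝ᵥ A *ᵥ x).re = (r*r) * (star u ⬝ᵥ A *ᵥ u).re := by
        conv_lhs => rw [hxu, quad_smul]
        rw [Complex.smul_re]; rfl
      have hqS : (star x ⬝ᵥ S *ᵥ x).re = (r*r) * (star u ⬝ᵥ S *ᵥ u).re := by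
        conv_lhs => rw [hxu, quad_smul]
        rw [Complex.smul_re]; rfl
      have hfu := hmin u hu
      have hgu := hmax u hu
      have habs : (star u ⬝ᵥ S *ᵥ u).re ≤ 1 + |G| := by
        have : G ≤ |G| := le_abs_self G
        linarith
      have hδle : δ * (star u ⬝ᵥ S *ᵥ u).re ≤ m / 2 := by
        have h1 : δ * (star u ⬝ᵥ S *ᵥ u).re ≤ δ * (1 + |G|) :=
          mul_le_mul_of_nonneg_left habs hδpos.le
        have h2 : δ * (1 + |G|) = m / 2 := by
          rw [hδdef]
          field_simp
        linarith
      have hrr : 0 < r * r := mul_pos hr hr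
      simp only [Complex.zero_re, Complex.sub_re, Complex.smul_re]
      rw [hqA, hqS]
      have hmr : m ≤ (star u ⬝ᵥ A *ᵥ u).re := hfu
      have final : δ * ((r*r) * (star u ⬝ᵥ S *ᵥ u).re) < (r*r) * (star u ⬝ᵥ A *ᵥ u).re := by
        have e1 : δ * ((r*r) * (star u ⬝ᵥ S *ᵥ u).re) = (r*r) * (δ * (star u ⬝ᵥ S *ᵥ u).re) := by
          ring
        rw [e1]
        have : δ * (star u ⬝ᵥ S *ᵥ u).re < (star u ⬝ᵥ A *ᵥ u).re := by
          have : m / 2 < m := by linarith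
          linarith
        exact (mul_lt_mul_iff_right₀ hrr).mpr this
      simp only [smul_eq_mul]
      linarith
    · -- imaginary part
      have h1 := quad_star hA.1 x
      have h2 := quad_star hS x
      simp [Complex.sub_im, Complex.smul_im, h1, h2]


lemma rankOne_isHermitian (γ : Fin n → ℂ) : (rankOne γ).IsHermitian := by
  ext a b
  simp [rankOne, Matrix.conjTranspose_apply, Matrix.vecMulVec_apply, mul_comm]

lemma sum_herm {ι : Type*} (s : Finset ι) (f : ι → Matrix (Fin n) (Fin n) ℂ)
    (h : ∀ i ∈ s, (f i).IsHermitian) : (∑ i ∈ s, f i).IsHermitian := by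
  unfold Matrix.IsHermitian
  rw [Matrix.conjTranspose_sum]
  exact Finset.sum_congr rfl h

lemma rankOne_eq (γ : Fin n → ℂ) :
    rankOne γ = Matrix.vecMulVec γ (fun j => (starRingEnd ℂ) (γ j)) := rfl

end Gill

open Gill

/-- Lemma 4.1 (M. Gill): on a compact set of positive definite Hermitian
matrices, there exist finitely many unit vectors `γ_ν`, containing an
orthonormal basis of `ℂⁿ`, and uniformly pinched coefficient functions `β_ν`
such that every matrix in the set decomposes as `∑ ν β_ν(A) γ_ν γ_νᴴ`. -/
theorem stmt_4 (n : ℕ) (hn : 1 ≤ n) (K : Set (Matrix (Fin n) (Fin n) ℂ))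
    (hK : IsCompact K) (hKpos : ∀ A ∈ K, A.PosDef) :
    ∃ (N : ℕ) (_ : 0 < N) (γ : Fin N → EuclideanSpace ℂ (Fin n)) (C : ℝ)
      (β : Fin N → Matrix (Fin n) (Fin n) ℂ → ℝ),
      (∀ ν, ‖γ ν‖ = 1) ∧
      (∃ b : OrthonormalBasis (Fin n) ℂ (EuclideanSpace ℂ (Fin n)),
        ∀ i, ∃ ν, b i = γ ν) ∧
      1 ≤ C ∧
      (∀ A ∈ K, ∀ ν, 1 / C ≤ β ν A ∧ β ν A ≤ C) ∧
      (∀ A ∈ K,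
        A = ∑ ν, β ν A •
          Matrix.vecMulVec (fun i => γ ν i) (fun j => (starRingEnd ℂ) (γ ν j))) := by
  classical
  rcases K.eq_empty_or_nonempty with hKe | hKne
  · refine ⟨n, hn, fun ν => EuclideanSpace.basisFun (Fin n) ℂ ν, 1, fun _ _ => 1,
      ?_, ?_, le_refl 1, ?_, ?_⟩
    · exact fun ν => (EuclideanSpace.basisFun (Fin n) ℂ).orthonormal.1 ν
    · exact ⟨EuclideanSpace.basisFun (Fin n) ℂ, fun i => ⟨i, rfl⟩⟩
    · intro A hA; rw [hKe] at hA; exact absurd hA (Set.notMem_empty A)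
    · intro A hA; rw [hKe] at hA; exact absurd hA (Set.notMem_empty A)
  -- main case
  obtain ⟨A₀, hA₀⟩ := hKne
  obtain ⟨S, hSdef⟩ : ∃ S : Matrix (Fin n) (Fin n) ℂ,
      S = ∑ p : Fin n × Fin n, rankOne (gam0 p) := ⟨_, rfl⟩
  have hSherm : S.IsHermitian := by
    rw [hSdef]; exact sum_herm _ _ (fun p _ => rankOne_isHermitian (gam0 p))
  -- shift parameter, opaque
  obtain ⟨del, hdelpos, hshiftPD⟩ :
      ∃ del : Matrix (Fin n) (Fin n) ℂ → ℝ, (∀ B, 0 < del B) ∧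
        (∀ B, B.PosDef → (B - del B • S).PosDef) := by
    refine ⟨fun B => if h : B.PosDef then (exists_sub_smul_posDef hn h S hSherm).choose else 1,
      ?_, ?_⟩
    · intro B
      by_cases h : B.PosDef
      · simp only [dif_pos h]
        exact (exists_sub_smul_posDef hn h S hSherm).choose_spec.1
      · simp only [dif_neg h]; norm_num
    · intro B h
      simp only [dif_pos h]
      exact (exists_sub_smul_posDef hn h S hSherm).choose_spec.2
  -- eigen data, opaque
  obtain ⟨wvec, eval, hwnorm, hspec, hevalpos⟩ :
      ∃ (wvec : Matrix (Fin n) (Fin n) ℂ → Fin n → EuclideanSpace ℂ (Fin n))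
        (eval : Matrix (Fin n) (Fin n) ℂ → Fin n → ℝ),
        (∀ B k, ‖wvec B k‖ = 1) ∧
        (∀ B, B.PosDef → B - del B • S = ∑ k, eval B k • rankOne (fun a => wvec B k a)) ∧
        (∀ B, B.PosDef → ∀ k, 0 < eval B k) := by
    refine ⟨fun B k => if h : (B - del B • S).IsHermitian then h.eigenvectorBasis k
      else EuclideanSpace.basisFun (Fin n) ℂ k,
      fun B k => if h : (B - del B • S).IsHermitian then h.eigenvalues k else 1, ?_, ?_, ?_⟩
    · intro B k
      by_cases h : (B - del B • S).IsHermitian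
      · simp only [dif_pos h]
        exact h.eigenvectorBasis.orthonormal.1 k
      · simp only [dif_neg h]
        exact (EuclideanSpace.basisFun (Fin n) ℂ).orthonormal.1 k
    · intro B hB
      have hh : (B - del B • S).IsHermitian := (hshiftPD B hB).1
      rw [spectral (B - del B • S) hh]
      refine Finset.sum_congr rfl fun k _ => ?_
      simp only [dif_pos hh]
    · intro B hB k
      have hh : (B - del B • S).IsHermitian := (hshiftPD B hB).1
      simp only [dif_pos hh]
      exact (hshiftPD B hB).eigenvalues_pos k
  -- radius
  obtain ⟨rad, hraddef⟩ : ∃ rad : Matrix (Fin n) (Fin n) ℂ → ℝ,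
      rad = fun B => del B / (2 * (2 * n + 1)) := ⟨_, rfl⟩
  have hradpos : ∀ B, 0 < rad B := by
    intro B
    rw [hraddef]
    have := hdelpos B
    have hnn : (0:ℝ) < 2 * n + 1 := by positivity
    positivity
  have hradeq : ∀ B, (2 * (n:ℝ) + 1) * rad B = del B / 2 := by
    intro B
    rw [hraddef]
    have hnn : (0:ℝ) < 2 * (n:ℝ) + 1 := by positivity
    field_simp
  -- cover
  obtain ⟨U, hUdef⟩ : ∃ U : K → Set (Matrix (Fin n) (Fin n) ℂ),
      U = fun c : K => {B | ∀ i j, ‖(B - (c : Matrix (Fin n) (Fin n) ℂ)) i j‖ < rad (c : Matrix (Fin n) (Fin n) ℂ)} := ⟨_, rfl⟩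
  have hUmem : ∀ (c : K) (B), B ∈ U c ↔ ∀ i j, ‖(B - (c : Matrix (Fin n) (Fin n) ℂ)) i j‖ < rad c := by
    intro c B; rw [hUdef]; exact Iff.rfl
  have hUopen : ∀ c, IsOpen (U c) := by
    intro c
    have : U c = ⋂ i, ⋂ j,
        ((fun B : Matrix (Fin n) (Fin n) ℂ => (B - (c : Matrix (Fin n) (Fin n) ℂ)) i j) ⁻¹'
        Metric.ball (0:ℂ) (rad c)) := by
      ext B
      simp only [hUdef, Set.mem_setOf_eq, Set.mem_iInter, Set.mem_preimage, mem_ball_zero_iff]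
    rw [this]
    refine isOpen_iInter_of_finite fun i => isOpen_iInter_of_finite fun j => ?_
    exact Metric.isOpen_ball.preimage
      (Continuous.matrix_elem (continuous_id.sub continuous_const) i j)
  have hcover : K ⊆ ⋃ c : K, U c := by
    intro A hA
    refine Set.mem_iUnion.mpr ⟨⟨A, hA⟩, ?_⟩
    rw [hUmem]
    intro i j
    simpa using hradpos A
  obtain ⟨t, ht⟩ := hK.elim_finite_subcover U hUopen hcover
  have hι : ∃ i : K, i ∈ t := by
    have := ht hA₀
    rw [Set.mem_iUnion₂] at this
    obtain ⟨i, hit, -⟩ := this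
    exact ⟨i, hit⟩
  obtain ⟨i₀', hi₀t⟩ := hι
  haveI hιne : Nonempty {i : K // i ∈ t} := ⟨⟨i₀', hi₀t⟩⟩
  have hpick' : ∀ B : Matrix (Fin n) (Fin n) ℂ, ∃ i : {i : K // i ∈ t}, B ∈ K → B ∈ U ↑i := by
    intro B
    by_cases hB : B ∈ K
    · have := ht hB
      rw [Set.mem_iUnion₂] at this
      obtain ⟨i, hit, hBU⟩ := this
      exact ⟨⟨i, hit⟩, fun _ => hBU⟩
    · exact ⟨⟨i₀', hi₀t⟩, fun h => absurd h hB⟩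
  choose pick hpick using hpick'
  -- global quantities
  obtain ⟨T, hTdef⟩ : ∃ T : Matrix (Fin n) (Fin n) ℂ,
      T = ∑ i : {i : K // i ∈ t}, ∑ k,
        rankOne (fun a => wvec (((i : K)) : Matrix (Fin n) (Fin n) ℂ) k a) := ⟨_, rfl⟩
  have hTherm : T.IsHermitian := by
    rw [hTdef]
    exact sum_herm _ _ (fun i _ => sum_herm _ _ (fun k _ => rankOne_isHermitian _))
  obtain ⟨Db, hDbdef⟩ : ∃ Db : ℝ, Db = ∑ p : Fin n × Fin n, |coef0 p T| := ⟨_, rfl⟩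
  have hDb0 : 0 ≤ Db := by
    rw [hDbdef]; exact Finset.sum_nonneg fun p _ => abs_nonneg _
  have hDble : ∀ p, |coef0 p T| ≤ Db := by
    intro p
    rw [hDbdef]
    exact Finset.single_le_sum (f := fun q => |coef0 q T|) (fun q _ => abs_nonneg _)
      (Finset.mem_univ p)
  have huniv : (Finset.univ : Finset {i : K // i ∈ t}).Nonempty := Finset.univ_nonempty
  obtain ⟨Δ, hΔdef⟩ : ∃ D : ℝ, D = Finset.inf' Finset.univ huniv
      (fun i : {i : K // i ∈ t} => del (((i : K)) : Matrix (Fin n) (Fin n) ℂ)) := ⟨_, rfl⟩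
  have hΔpos : 0 < Δ := by
    rw [hΔdef, Finset.lt_inf'_iff]
    exact fun i _ => hdelpos _
  have hΔle : ∀ i : {i : K // i ∈ t}, Δ ≤ del (((i : K)) : Matrix (Fin n) (Fin n) ℂ) := by
    intro i
    rw [hΔdef]
    exact Finset.inf'_le _ (Finset.mem_univ i)
  obtain ⟨ρ, hρdef⟩ : ∃ r : ℝ, r = Δ / (4 * (1 + Db)) := ⟨_, rfl⟩
  have hρpos : 0 < ρ := by
    rw [hρdef]; positivity
  have hρle : ρ * (1 + Db) = Δ / 4 := by
    rw [hρdef]; field_simp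
  have hρΔ : ρ ≤ Δ / 4 := by nlinarith [hρpos, hDb0]
  have hρT : ∀ p, ρ * |coef0 p T| ≤ Δ / 4 := by
    intro p
    have := hDble p
    nlinarith [hρpos.le, abs_nonneg (coef0 p T)]
  obtain ⟨Em, hEmdef⟩ : ∃ E : ℝ, E = ∑ i : {i : K // i ∈ t}, ∑ k,
      |eval (((i : K)) : Matrix (Fin n) (Fin n) ℂ) k| := ⟨_, rfl⟩
  have hEm0 : 0 ≤ Em := by
    rw [hEmdef]
    exact Finset.sum_nonneg fun i _ => Finset.sum_nonneg fun k _ => abs_nonneg _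
  have hEmle : ∀ (i : {i : K // i ∈ t}) (k),
      |eval (((i : K)) : Matrix (Fin n) (Fin n) ℂ) k| ≤ Em := by
    intro i k
    rw [hEmdef]
    calc |eval (((i : K)) : Matrix (Fin n) (Fin n) ℂ) k|
        ≤ ∑ k', |eval (((i : K)) : Matrix (Fin n) (Fin n) ℂ) k'| :=
          Finset.single_le_sum
            (f := fun k' => |eval (((i : K)) : Matrix (Fin n) (Fin n) ℂ) k'|)
            (fun k' _ => abs_nonneg _) (Finset.mem_univ k)
      _ ≤ _ := Finset.single_le_sum
          (f := fun i' : {i : K // i ∈ t} =>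
            ∑ k', |eval (((i' : K)) : Matrix (Fin n) (Fin n) ℂ) k'|)
          (fun i' _ => Finset.sum_nonneg fun k' _ => abs_nonneg _)
          (Finset.mem_univ i)
  obtain ⟨dmax, hdmaxdef⟩ : ∃ d : ℝ, d = ∑ i : {i : K // i ∈ t},
      del (((i : K)) : Matrix (Fin n) (Fin n) ℂ) := ⟨_, rfl⟩
  have hdmaxle : ∀ i : {i : K // i ∈ t},
      del (((i : K)) : Matrix (Fin n) (Fin n) ℂ) ≤ dmax := by
    intro i
    rw [hdmaxdef]
    exact Finset.single_le_sum
      (f := fun i' : {i : K // i ∈ t} => del (((i' : K)) : Matrix (Fin n) (Fin n) ℂ))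
      (fun i' _ => (hdelpos _).le) (Finset.mem_univ i)
  have hdmax0 : 0 ≤ dmax := by
    rw [hdmaxdef]; exact Finset.sum_nonneg fun i _ => (hdelpos _).le
  obtain ⟨C, hCdef⟩ : ∃ C : ℝ, C = 1/ρ + 2*dmax + ρ + Em + 1 := ⟨_, rfl⟩
  have hC1 : 1 ≤ C := by
    have : 0 < 1/ρ := by positivity
    rw [hCdef]; nlinarith
  have hCρ : 1/C ≤ ρ := by
    have hCpos : 0 < C := lt_of_lt_of_le one_pos hC1
    have h1 : 1/ρ ≤ C := by rw [hCdef]; nlinarith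
    calc 1/C ≤ 1/(1/ρ) := one_div_le_one_div_of_le (by positivity) h1
      _ = ρ := one_div_one_div ρ
  have hC2 : 2*dmax ≤ C := by
    rw [hCdef]
    have : 0 < 1/ρ := by positivity
    nlinarith
  have hC3 : Em + ρ ≤ C := by
    rw [hCdef]
    have : 0 < 1/ρ := by positivity
    nlinarith
  -- index type and data
  obtain ⟨γ', hγinl, hγinr⟩ :
      ∃ γ' : (Fin n × Fin n) ⊕ ({i : K // i ∈ t} × Fin n) → EuclideanSpace ℂ (Fin n),
        (∀ p, γ' (Sum.inl p) = gamE p) ∧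
        (∀ q, γ' (Sum.inr q) = wvec (((q.1 : K)) : Matrix (Fin n) (Fin n) ℂ) q.2) :=
    ⟨fun x => Sum.rec (fun p => gamE p)
      (fun q => wvec (((q.1 : K)) : Matrix (Fin n) (Fin n) ℂ) q.2) x,
      fun p => rfl, fun q => rfl⟩
  obtain ⟨β', hβinl, hβinr⟩ :
      ∃ β' : (Fin n × Fin n) ⊕ ({i : K // i ∈ t} × Fin n) →
          Matrix (Fin n) (Fin n) ℂ → ℝ,
        (∀ p A, β' (Sum.inl p) A = del (((pick A : K)) : Matrix (Fin n) (Fin n) ℂ)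
          + coef0 p (A - (((pick A : K)) : Matrix (Fin n) (Fin n) ℂ)) - ρ * coef0 p T) ∧
        (∀ q A, β' (Sum.inr q) A =
          (if pick A = q.1 then eval (((q.1 : K)) : Matrix (Fin n) (Fin n) ℂ) q.2 else 0) + ρ) :=
    ⟨fun x A => Sum.rec
      (fun p => del (((pick A : K)) : Matrix (Fin n) (Fin n) ℂ)
        + coef0 p (A - (((pick A : K)) : Matrix (Fin n) (Fin n) ℂ)) - ρ * coef0 p T)
      (fun q => (if pick A = q.1 then eval (((q.1 : K)) : Matrix (Fin n) (Fin n) ℂ) q.2 else 0) + ρ)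
      x, fun p A => rfl, fun q A => rfl⟩
  haveI : Nonempty ((Fin n × Fin n) ⊕ ({i : K // i ∈ t} × Fin n)) :=
    ⟨Sum.inl (⟨0, hn⟩, ⟨0, hn⟩)⟩
  obtain ⟨e⟩ : Nonempty (((Fin n × Fin n) ⊕ ({i : K // i ∈ t} × Fin n)) ≃
      Fin (Fintype.card ((Fin n × Fin n) ⊕ ({i : K // i ∈ t} × Fin n)))) :=
    ⟨Fintype.equivFin _⟩
  refine ⟨_, Fintype.card_pos, fun ν => γ' (e.symm ν), C, fun ν => β' (e.symm ν),
    ?_, ?_, hC1, ?_, ?_⟩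
  · -- norms
    intro ν
    show ‖γ' (e.symm ν)‖ = 1
    rcases hx : e.symm ν with p | q
    · rw [hγinl]; exact gam0_norm p
    · rw [hγinr]; exact hwnorm _ _
  · -- orthonormal basis
    refine ⟨EuclideanSpace.basisFun (Fin n) ℂ, fun i => ⟨e (Sum.inl (i, i)), ?_⟩⟩
    show EuclideanSpace.basisFun (Fin n) ℂ i = γ' (e.symm (e (Sum.inl (i, i))))
    rw [Equiv.symm_apply_apply, hγinl]
    ext a
    rw [EuclideanSpace.basisFun_apply]
    rw [show (EuclideanSpace.single i (1:ℂ)) a = if a = i then 1 else 0 from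
      EuclideanSpace.single_apply i 1 a]
    show (if a = i then 1 else 0 : ℂ) = gam0 (i, i) a
    simp [gam0, uu, vv]
  · -- bounds
    intro A hA ν
    have hAU : A ∈ U ((pick A : K)) := hpick A hA
    rw [hUmem] at hAU
    have hcK : ((pick A : K) : Matrix (Fin n) (Fin n) ℂ) ∈ K := (pick A : K).2
    have hcPD : (((pick A : K)) : Matrix (Fin n) (Fin n) ℂ).PosDef := hKpos _ hcK
    have hAc : ∀ i j, ‖(A - (((pick A : K)) : Matrix (Fin n) (Fin n) ℂ)) i j‖
        ≤ rad (((pick A : K)) : Matrix (Fin n) (Fin n) ℂ) := fun i j => (hAU i j).le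
    have hcoef : ∀ p, |coef0 p (A - (((pick A : K)) : Matrix (Fin n) (Fin n) ℂ))|
        ≤ del (((pick A : K)) : Matrix (Fin n) (Fin n) ℂ) / 2 := by
      intro p
      have h1 := abs_coef0_le p (A - (((pick A : K)) : Matrix (Fin n) (Fin n) ℂ))
        (rad (((pick A : K)) : Matrix (Fin n) (Fin n) ℂ)) (hradpos _).le hAc
      have h2 := hradeq (((pick A : K)) : Matrix (Fin n) (Fin n) ℂ)
      linarith
    have hΔc : Δ ≤ del (((pick A : K)) : Matrix (Fin n) (Fin n) ℂ) := hΔle (pick A)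
    have key : ∀ d co cT : ℝ, Δ ≤ d → d ≤ dmax → |co| ≤ d/2 → |cT| ≤ Db →
        1/C ≤ d + co - ρ*cT ∧ d + co - ρ*cT ≤ C := by
      intro d co cT h1 h2 h3 h4
      have hab := abs_le.mp h3
      have e1 : ρ * cT ≤ ρ * |cT| := mul_le_mul_of_nonneg_left (le_abs_self _) hρpos.le
      have e1' : ρ * (-|cT|) ≤ ρ * cT := mul_le_mul_of_nonneg_left (neg_abs_le _) hρpos.le
      have e2 : ρ * |cT| ≤ ρ * (1 + Db) := mul_le_mul_of_nonneg_left (by linarith) hρpos.le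
      have e3 : ρ * (-|cT|) = -(ρ * |cT|) := by ring
      constructor
      · linarith [hCρ, hρΔ, hρle]
      · linarith [hC2, hρle]
    have key2 : ∀ x : ℝ, 0 ≤ x → x ≤ Em → (1/C ≤ x + ρ ∧ x + ρ ≤ C) := by
      intro x h1 h2
      exact ⟨by linarith [hCρ], by linarith [hC3]⟩
    show 1 / C ≤ β' (e.symm ν) A ∧ β' (e.symm ν) A ≤ C
    rcases hx : e.symm ν with p | q
    · rw [hβinl]
      exact key _ _ _ hΔc (hdmaxle (pick A)) (hcoef p) (hDble p)
    · rw [hβinr]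
      refine key2 _ ?_ ?_
      · split_ifs with h
        · exact (hevalpos _ (hKpos _ (q.1 : K).2) q.2).le
        · exact le_refl 0
      · split_ifs with h
        · exact le_trans (le_abs_self _) (hEmle q.1 q.2)
        · exact hEm0
  · -- decomposition
    intro A hA
    have hAPD : A.PosDef := hKpos A hA
    have hcK : ((pick A : K) : Matrix (Fin n) (Fin n) ℂ) ∈ K := (pick A : K).2
    have hcPD : (((pick A : K)) : Matrix (Fin n) (Fin n) ℂ).PosDef := hKpos _ hcK
    have hAcherm : (A - (((pick A : K)) : Matrix (Fin n) (Fin n) ℂ)).IsHermitian :=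
      hAPD.1.sub hcPD.1
    have hmain : A = ∑ x : (Fin n × Fin n) ⊕ ({i : K // i ∈ t} × Fin n),
        β' x A • rankOne (fun a => γ' x a) := by
      rw [Fintype.sum_sum_type]
      have hinl : ∑ p : Fin n × Fin n, β' (Sum.inl p) A • rankOne (fun a => γ' (Sum.inl p) a)
          = del (((pick A : K)) : Matrix (Fin n) (Fin n) ℂ) • S
            + (A - (((pick A : K)) : Matrix (Fin n) (Fin n) ℂ)) - ρ • T := by
        have hterm : ∀ p : Fin n × Fin n,
            β' (Sum.inl p) A • rankOne (fun a => γ' (Sum.inl p) a)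
            = del (((pick A : K)) : Matrix (Fin n) (Fin n) ℂ) • rankOne (gam0 p)
              + coef0 p (A - (((pick A : K)) : Matrix (Fin n) (Fin n) ℂ)) • rankOne (gam0 p)
              - ρ • (coef0 p T • rankOne (gam0 p)) := by
          intro p
          rw [hβinl, hγinl]
          rw [show (fun a => gamE p a) = gam0 p from rfl]
          rw [sub_smul, add_smul, smul_smul]
        rw [Finset.sum_congr rfl (fun p _ => hterm p)]
        rw [Finset.sum_sub_distrib, Finset.sum_add_distrib, ← Finset.smul_sum, ← Finset.smul_sum,
          ← hSdef, ← recon _ hAcherm, ← recon T hTherm]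
      have hinr : ∑ q : {i : K // i ∈ t} × Fin n,
          β' (Sum.inr q) A • rankOne (fun a => γ' (Sum.inr q) a)
          = ((((pick A : K)) : Matrix (Fin n) (Fin n) ℂ)
              - del (((pick A : K)) : Matrix (Fin n) (Fin n) ℂ) • S) + ρ • T := by
        rw [Fintype.sum_prod_type]
        have hterm : ∀ (i : {i : K // i ∈ t}) (k : Fin n),
            β' (Sum.inr (i, k)) A • rankOne (fun a => γ' (Sum.inr (i, k)) a)
            = (if pick A = i then
                eval (((i : K)) : Matrix (Fin n) (Fin n) ℂ) k •
                  rankOne (fun a => wvec (((i : K)) : Matrix (Fin n) (Fin n) ℂ) k a) else 0)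
              + ρ • rankOne (fun a => wvec (((i : K)) : Matrix (Fin n) (Fin n) ℂ) k a) := by
          intro i k
          rw [hβinr, hγinr]
          rw [add_smul, ite_smul, zero_smul]
        rw [Finset.sum_congr rfl (fun i _ => Finset.sum_congr rfl (fun k _ => hterm i k))]
        have hsplit : ∀ i : {i : K // i ∈ t},
            (∑ k : Fin n, ((if pick A = i then
                eval (((i : K)) : Matrix (Fin n) (Fin n) ℂ) k •
                  rankOne (fun a => wvec (((i : K)) : Matrix (Fin n) (Fin n) ℂ) k a) else 0)
              + ρ • rankOne (fun a => wvec (((i : K)) : Matrix (Fin n) (Fin n) ℂ) k a)))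
            = (if pick A = i then
                ∑ k : Fin n, eval (((i : K)) : Matrix (Fin n) (Fin n) ℂ) k •
                  rankOne (fun a => wvec (((i : K)) : Matrix (Fin n) (Fin n) ℂ) k a) else 0)
              + ∑ k : Fin n, ρ • rankOne (fun a => wvec (((i : K)) : Matrix (Fin n) (Fin n) ℂ) k a) := by
          intro i
          rw [Finset.sum_add_distrib]
          congr 1
          split_ifs with h
          · rfl
          · exact Finset.sum_const_zero
        rw [Finset.sum_congr rfl (fun i _ => hsplit i), Finset.sum_add_distrib]
        congr 1
        · rw [Fintype.sum_ite_eq (pick A)]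
          exact (hspec _ hcPD).symm
        · simp only [← Finset.smul_sum]
          rw [hTdef]
      rw [hinl, hinr]
      abel
    calc A = ∑ x : (Fin n × Fin n) ⊕ ({i : K // i ∈ t} × Fin n),
          β' x A • rankOne (fun a => γ' x a) := hmain
      _ = ∑ ν, β' (e.symm ν) A • rankOne (fun a => γ' (e.symm ν) a) :=
          (Equiv.sum_comp e.symm (fun x => β' x A • rankOne (fun a => γ' x a))).symm
      _ = ∑ ν, β' (e.symm ν) A •
          Matrix.vecMulVec (fun i => γ' (e.symm ν) i) (fun j => (starRingEnd ℂ) (γ' (e.symm ν) j)) :=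
          rfl
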